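/- Let p ≥ 5 be a prime and let r, m be positive integers with p ∤ m. Then for all integers s with 0 ≤ s ≤ r-1 and 1 ≤ k ≤ p^{r-s}m - 1, \binom{p^{r-s}m-1}{k}\binom{p^{r-s}m+k}{k} \equiv \binom{p^{r-s-1}m-1}{\lfloor k/p \rfloor}\binom{p^{r-s-1}m + \lfloor k/p \rfloor}{\lfloor k/p \rfloor} (-1)^{k - \lfloor k/p \rfloor}\left(1 - \sum_{j=1, p \nmid j}^{k} \frac{p^{2r-2s} m^2}{j^2}\right) \pmod{p^{4r-4s}}. -/

import Mathlib

open Finset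

theorem my_choose_prod {F : Type*} [Field F] [CharZero F] (n k : ℕ) : k < n →
    ((n - 1).choose k : F) * ((n + k).choose k : F) =
      ∏ j ∈ Icc 1 k, (((n : F) ^ 2 - (j : F) ^ 2) / (j : F) ^ 2) := by
  induction k with
  | zero => simp
  | succ k ih =>
    intro hk
    have ihk := ih (by omega)
    have h1 : ((n - 1).choose (k + 1) : F) * ((k : F) + 1)
        = ((n - 1).choose k : F) * ((n : F) - ((k : F) + 1)) := by
      have h := congrArg (Nat.cast : ℕ → F) (Nat.choose_succ_right_eq (n - 1) k)
      push_cast at h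
      have hcast : ((n - 1 - k : ℕ) : F) = (n : F) - ((k : F) + 1) := by
        have h' : n - 1 - k = n - (k + 1) := by omega
        rw [h', Nat.cast_sub (by omega)]
        push_cast; ring
      rw [hcast] at h
      linear_combination h
    have h2 : ((n + k + 1).choose (k + 1) : F) * ((k : F) + 1)
        = ((n : F) + ((k : F) + 1)) * ((n + k).choose k : F) := by
      have h := congrArg (Nat.cast : ℕ → F) (Nat.add_one_mul_choose_eq (n + k) k)
      push_cast [Nat.succ_eq_add_one] at h
      linear_combination -h
    rw [Finset.prod_Icc_succ_top (by omega : 1 ≤ k + 1), ← ihk]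
    have hk1 : ((k : F) + 1) ≠ 0 := by
      have h0 : ((k + 1 : ℕ) : F) ≠ 0 := Nat.cast_ne_zero.2 k.succ_ne_zero
      push_cast at h0; exact h0
    have key : (((n + (k + 1)).choose (k + 1) : ℕ) : F) = ((n + k + 1).choose (k + 1) : ℕ) := by
      norm_num [add_assoc]
    push_cast [key]
    field_simp
    linear_combination (((n + k + 1).choose (k + 1) : F) * ((k : F) + 1)) * h1 +
      (((n - 1).choose k : F) * ((n : F) - ((k : F) + 1))) * h2

theorem my_sum_norm_le {p : ℕ} [Fact p.Prime] (S : Finset ℕ) (x : ℕ → ℚ_[p]) {ε : ℝ}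
    (hε : 0 ≤ ε) (h : ∀ j ∈ S, ‖x j‖ ≤ ε) : ‖∑ j ∈ S, x j‖ ≤ ε := by
  classical
  induction S using Finset.induction_on with
  | empty => simpa using hε
  | @insert a S ha ih =>
    rw [Finset.sum_insert ha]
    exact le_trans (Padic.nonarchimedean _ _)
      (max_le (h _ (mem_insert_self _ _)) (ih fun j hj => h j (mem_insert_of_mem hj)))

theorem my_prod_one_sub {p : ℕ} [Fact p.Prime] (S : Finset ℕ) (x : ℕ → ℚ_[p]) {ε : ℝ}
    (hε0 : 0 ≤ ε) (hε1 : ε ≤ 1) (h : ∀ j ∈ S, ‖x j‖ ≤ ε) :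
    ‖(∏ j ∈ S, (1 - x j)) - (1 - ∑ j ∈ S, x j)‖ ≤ ε ^ 2 := by
  classical
  induction S using Finset.induction_on with
  | empty => simp; positivity
  | @insert a S ha ih =>
    have hxa := h a (mem_insert_self a S)
    have ihS := ih fun j hj => h j (mem_insert_of_mem hj)
    rw [Finset.prod_insert ha, Finset.sum_insert ha]
    have key : (1 - x a) * ∏ j ∈ S, (1 - x j) - (1 - (x a + ∑ j ∈ S, x j))
        = (1 - x a) * ((∏ j ∈ S, (1 - x j)) - (1 - ∑ j ∈ S, x j)) + x a * ∑ j ∈ S, x j := by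
      ring
    rw [key]
    refine le_trans (Padic.nonarchimedean _ _) (max_le ?_ ?_)
    · rw [norm_mul]
      have h1 : ‖1 - x a‖ ≤ 1 := by
        rw [sub_eq_add_neg]
        refine le_trans (Padic.nonarchimedean 1 (-x a)) ?_
        simp only [norm_neg, norm_one]
        exact max_le le_rfl (le_trans hxa hε1)
      calc ‖1 - x a‖ * ‖(∏ j ∈ S, (1 - x j)) - (1 - ∑ j ∈ S, x j)‖ ≤ 1 * ε ^ 2 :=
            mul_le_mul h1 ihS (norm_nonneg _) one_pos.le
        _ = ε ^ 2 := one_mul _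
    · rw [norm_mul, sq]
      exact mul_le_mul hxa (my_sum_norm_le S x hε0 fun j hj => h j (mem_insert_of_mem hj))
        (norm_nonneg _) hε0

theorem binom_prod_congruence (p : ℕ) [Fact p.Prime] (hp5 : 5 ≤ p)
    (r m : ℕ) (hr : 0 < r) (hm : 0 < m) (hpm : ¬ p ∣ m)
    (s : ℕ) (hs : s ≤ r - 1) (k : ℕ) (hk1 : 1 ≤ k) (hk2 : k ≤ p ^ (r - s) * m - 1) :
    ‖(((p ^ (r - s) * m - 1).choose k : ℚ_[p]) *
        ((p ^ (r - s) * m + k).choose k : ℚ_[p]) -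
      ((p ^ (r - s - 1) * m - 1).choose (k / p) : ℚ_[p]) *
        ((p ^ (r - s - 1) * m + k / p).choose (k / p) : ℚ_[p]) *
        (-1) ^ (k - k / p) *
        (1 - ∑ j ∈ (Finset.Icc 1 k).filter (fun j => ¬ p ∣ j),
              (p : ℚ_[p]) ^ (2 * r - 2 * s) * (m : ℚ_[p]) ^ 2 / ((j : ℚ_[p]) ^ 2)))‖ ≤
      (p : ℝ) ^ (-(4 * (r : ℤ) - 4 * (s : ℤ))) := by
  have hp : p.Prime := Fact.out
  have hp0 : 0 < p := hp.pos
  have hsr : s < r := by omega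
  set n : ℕ := p ^ (r - s) * m with hn_def
  set n' : ℕ := p ^ (r - s - 1) * m with hn'_def
  set K : ℕ := k / p with hK_def
  have hn_pos : 0 < n := Nat.mul_pos (Nat.pow_pos hp0) hm
  have hn' : n = p * n' := by
    rw [hn_def, hn'_def, ← mul_assoc, ← pow_succ']
    congr 2
    omega
  have hkn : k < n := by omega
  have hKn' : K < n' := by
    rw [hK_def, Nat.div_lt_iff_lt_mul hp0, mul_comm]
    rw [hn'] at hkn; exact hkn
  set x : ℕ → ℚ_[p] := fun j =>
    (p : ℚ_[p]) ^ (2 * r - 2 * s) * (m : ℚ_[p]) ^ 2 / ((j : ℚ_[p]) ^ 2) with hx_def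
  have hnx : ((n : ℚ_[p])) ^ 2 = (p : ℚ_[p]) ^ (2 * r - 2 * s) * (m : ℚ_[p]) ^ 2 := by
    rw [hn_def]
    push_cast
    rw [mul_pow, ← pow_mul, show (r - s) * 2 = 2 * r - 2 * s by omega]
  set g : ℕ → ℚ_[p] := fun j => ((n : ℚ_[p]) ^ 2 - (j : ℚ_[p]) ^ 2) / (j : ℚ_[p]) ^ 2 with hg_def
  have inj : Function.Injective (fun i : ℕ => p * i) := fun a b hab => by
    simpa using Nat.eq_of_mul_eq_mul_left hp0 hab
  have himg : (Icc 1 k).filter (fun j => p ∣ j) = (Icc 1 K).image (fun i => p * i) := by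
    ext j
    simp only [mem_filter, mem_Icc, mem_image]
    constructor
    · rintro ⟨⟨hj1, hj2⟩, i, rfl⟩
      refine ⟨i, ⟨?_, ?_⟩, rfl⟩
      · rcases Nat.eq_zero_or_pos i with h | h
        · simp [h] at hj1
        · exact h
      · rw [hK_def, Nat.le_div_iff_mul_le hp0, mul_comm]; exact hj2
    · rintro ⟨i, ⟨hi1, hi2⟩, rfl⟩
      rw [hK_def, Nat.le_div_iff_mul_le hp0] at hi2
      rw [mul_comm] at hi2
      exact ⟨⟨Nat.mul_pos hp0 hi1, hi2⟩, ⟨i, rfl⟩⟩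
  have hcard1 : ((Icc 1 k).filter (fun j => p ∣ j)).card = K := by
    rw [himg, Finset.card_image_of_injective _ inj, Nat.card_Icc]
    simp
  have hcard2 : ((Icc 1 k).filter (fun j => ¬ p ∣ j)).card = k - K := by
    have := Finset.card_filter_add_card_filter_not (s := Icc 1 k)
      (p := fun j => p ∣ j)
    rw [hcard1, Nat.card_Icc] at this
    have hKk : K ≤ k := Nat.div_le_self _ _
    omega
  have hprodP : ∏ j ∈ (Icc 1 k).filter (fun j => p ∣ j), g j
      = ((n' - 1).choose K : ℚ_[p]) * ((n' + K).choose K : ℚ_[p]) := by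
    rw [himg, Finset.prod_image (fun a _ b _ h => inj h), my_choose_prod n' K hKn']
    refine Finset.prod_congr rfl fun i hi => ?_
    simp only [mem_Icc] at hi
    have hi0 : (i : ℚ_[p]) ≠ 0 := Nat.cast_ne_zero.2 (by omega)
    have hpc : (p : ℚ_[p]) ≠ 0 := Nat.cast_ne_zero.2 (by omega)
    simp only [hg_def, hn']
    push_cast
    field_simp
  have hprodN : ∏ j ∈ (Icc 1 k).filter (fun j => ¬ p ∣ j), g j
      = (-1 : ℚ_[p]) ^ (k - K) *
        ∏ j ∈ (Icc 1 k).filter (fun j => ¬ p ∣ j), (1 - x j) := by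
    have hcong : ∀ j ∈ (Icc 1 k).filter (fun j => ¬ p ∣ j),
        g j = (-1) * (1 - x j) := by
      intro j hj
      simp only [mem_filter, mem_Icc] at hj
      have hj0 : (j : ℚ_[p]) ≠ 0 := Nat.cast_ne_zero.2 (by omega)
      simp only [hg_def, hx_def, ← hnx]
      field_simp
      ring
    rw [Finset.prod_congr rfl hcong, Finset.prod_mul_distrib, Finset.prod_const, hcard2]
  have hA : ((n - 1).choose k : ℚ_[p]) * ((n + k).choose k : ℚ_[p])
      = ((n' - 1).choose K : ℚ_[p]) * ((n' + K).choose K : ℚ_[p]) *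
        ((-1 : ℚ_[p]) ^ (k - K) *
          ∏ j ∈ (Icc 1 k).filter (fun j => ¬ p ∣ j), (1 - x j)) := by
    rw [my_choose_prod n k hkn,
      ← Finset.prod_filter_mul_prod_filter_not (Icc 1 k) (fun j => p ∣ j) g,
      hprodP, hprodN]
  rw [show (((n - 1).choose k : ℚ_[p]) * ((n + k).choose k : ℚ_[p]) -
      ((n' - 1).choose K : ℚ_[p]) * ((n' + K).choose K : ℚ_[p]) * (-1) ^ (k - K) *
        (1 - ∑ j ∈ (Finset.Icc 1 k).filter (fun j => ¬ p ∣ j), x j))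
      = (((n' - 1).choose K : ℚ_[p]) * ((n' + K).choose K : ℚ_[p]) * (-1) ^ (k - K)) *
        ((∏ j ∈ (Icc 1 k).filter (fun j => ¬ p ∣ j), (1 - x j)) -
          (1 - ∑ j ∈ (Finset.Icc 1 k).filter (fun j => ¬ p ∣ j), x j))
      from by linear_combination hA]
  set ε : ℝ := (p : ℝ) ^ (-((2 * r - 2 * s : ℕ) : ℤ)) with hε_def
  have hp1R : (1 : ℝ) < (p : ℝ) := by exact_mod_cast hp.one_lt
  have hε0 : 0 ≤ ε := by positivity
  have hε1 : ε ≤ 1 := zpow_le_one_of_nonpos₀ hp1R.le (by omega)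
  have hxj : ∀ j ∈ (Icc 1 k).filter (fun j => ¬ p ∣ j), ‖x j‖ ≤ ε := by
    intro j hj
    simp only [mem_filter, mem_Icc] at hj
    have hjnorm : ‖(j : ℚ_[p])‖ = 1 := by
      refine le_antisymm ?_ ?_
      · have := Padic.norm_int_le_one (p := p) (j : ℤ)
        push_cast at this
        exact this
      · by_contra hlt
        push_neg at hlt
        have := (Padic.norm_intCast_lt_one_iff (p := p) (k := (j : ℤ))).1 (by push_cast; exact hlt)
        exact hj.2 (by exact_mod_cast this)
    have hmnorm : ‖(m : ℚ_[p])‖ ≤ 1 := by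
      have := Padic.norm_int_le_one (p := p) (m : ℤ)
      push_cast at this
      exact this
    have e1 : ‖(p : ℚ_[p]) ^ (2 * r - 2 * s)‖ = ε := Padic.norm_p_pow _
    have e2 : ‖(j : ℚ_[p]) ^ 2‖ = 1 := by rw [norm_pow, hjnorm, one_pow]
    have e3 : ‖(m : ℚ_[p]) ^ 2‖ ≤ 1 := by
      rw [norm_pow]
      calc ‖(m : ℚ_[p])‖ ^ 2 ≤ 1 ^ 2 := pow_le_pow_left₀ (norm_nonneg _) hmnorm 2
        _ = 1 := one_pow 2
    simp only [hx_def]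
    rw [norm_div, norm_mul, e1, e2, div_one]
    have : ε * ‖(m : ℚ_[p]) ^ 2‖ ≤ ε * 1 := mul_le_mul_of_nonneg_left e3 hε0
    simpa using this
  have hmain := my_prod_one_sub ((Icc 1 k).filter (fun j => ¬ p ∣ j)) x hε0 hε1 hxj
  have hfinal : ε ^ 2 = (p : ℝ) ^ (-(4 * (r : ℤ) - 4 * (s : ℤ))) := by
    rw [hε_def, sq, ← zpow_add₀ (by positivity : (p : ℝ) ≠ 0)]
    congr 1
    omega
  rw [norm_mul]
  calc ‖((n' - 1).choose K : ℚ_[p]) * ((n' + K).choose K : ℚ_[p]) * (-1) ^ (k - K)‖ *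
      ‖(∏ j ∈ (Icc 1 k).filter (fun j => ¬ p ∣ j), (1 - x j)) -
        (1 - ∑ j ∈ (Finset.Icc 1 k).filter (fun j => ¬ p ∣ j), x j)‖
      ≤ 1 * ε ^ 2 := by
        refine mul_le_mul ?_ hmain (norm_nonneg _) one_pos.le
        rw [norm_mul, norm_mul, norm_pow, norm_neg, norm_one, one_pow, mul_one]
        have h1 : ‖((n' - 1).choose K : ℚ_[p])‖ ≤ 1 := by
          have := Padic.norm_int_le_one (p := p) (((n' - 1).choose K : ℕ) : ℤ)
          push_cast at this; exact this
        have h2 : ‖((n' + K).choose K : ℚ_[p])‖ ≤ 1 := by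
          have := Padic.norm_int_le_one (p := p) (((n' + K).choose K : ℕ) : ℤ)
          push_cast at this; exact this
        calc ‖((n' - 1).choose K : ℚ_[p])‖ * ‖((n' + K).choose K : ℚ_[p])‖ ≤ 1 * 1 :=
              mul_le_mul h1 h2 (norm_nonneg _) one_pos.le
          _ = 1 := one_mul 1
    _ = (p : ℝ) ^ (-(4 * (r : ℤ) - 4 * (s : ℤ))) := by rw [one_mul, hfinal]
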